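/- Basic-Step setup: n = r+s, A₁,…,A_m are symmetric n×n real matrices with A₁ = fromBlocks(D,0,0,0) for an r×r positive definite matrix D, and b ∈ ℝᵐ with b₁ = 0. Then an n×n matrix X is feasible for (P) (i.e., X ⪰ 0 and Aᵢ • X = bᵢ for all i = 1,…,m) if and only if there exists an s×s matrix Y feasible for (P_pre) (i.e., Y ⪰ 0 and (Aᵢ)₂₂ • Y = bᵢ for all i = 2,…,m) with X = fromBlocks(0,0,0,Y). -/

import Mathlib

open Matrix

private lemma trace_fromBlocks_aux {p q : Type*} [Fintype p] [Fintype q]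
    (A : Matrix p p ℝ) (B : Matrix p q ℝ) (C : Matrix q p ℝ) (Dm : Matrix q q ℝ) :
    (fromBlocks A B C Dm).trace = A.trace + Dm.trace := by
  simp [Matrix.trace, Fintype.sum_sum_type, fromBlocks, Matrix.diag]

private lemma trace_mul_fromBlocks_aux {p q : Type*} [Fintype p] [Fintype q]
    (M : Matrix (p ⊕ q) (p ⊕ q) ℝ) (Y : Matrix q q ℝ) :
    (M * fromBlocks 0 0 0 Y).trace = (M.toBlocks₂₂ * Y).trace := by
  conv_lhs => rw [← fromBlocks_toBlocks M]
  rw [fromBlocks_multiply, trace_fromBlocks_aux]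
  simp

private lemma psd_eq_zero_of_trace_mul_posDef {p : Type*} [Fintype p] [DecidableEq p]
    {D : Matrix p p ℝ} (hD : D.PosDef) {Q : Matrix p p ℝ} (hQ : Q.PosSemidef)
    (h : (D * Q).trace = 0) : Q = 0 := by
  obtain ⟨B, rfl⟩ : ∃ B : Matrix p p ℝ, Q = Bᴴ * B := by
    open scoped MatrixOrder in exact CStarAlgebra.nonneg_iff_eq_star_mul_self.mp hQ.nonneg
  suffices hB : B = 0 by simp [hB]
  have htr : (B * D * Bᴴ).trace = 0 := by
    rw [Matrix.trace_mul_comm, ← Matrix.mul_assoc, Matrix.trace_mul_comm]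
    exact h
  have hterm : ∀ i, (B * D * Bᴴ) i i = (fun j => B i j) ⬝ᵥ D *ᵥ (fun j => B i j) := by
    intro i
    simp only [Matrix.mul_apply, conjTranspose_apply, star_trivial, dotProduct,
      Matrix.mulVec, Finset.sum_mul, Finset.mul_sum]
    rw [Finset.sum_comm]
    congr 1; ext k; congr 1; ext j; ring
  have hnonneg : ∀ i, 0 ≤ (B * D * Bᴴ) i i := by
    intro i
    rw [hterm i]
    simpa using hD.posSemidef.dotProduct_mulVec_nonneg (fun j => B i j)
  have hzero : ∀ i, (B * D * Bᴴ) i i = 0 := by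
    intro i
    have := (Finset.sum_eq_zero_iff_of_nonneg (fun i _ => hnonneg i)).mp htr
    exact this i (Finset.mem_univ i)
  funext i j
  by_contra hij
  have hrow : (fun j => B i j) ≠ 0 := by
    intro hr
    exact hij (by simpa using congrFun hr j)
  have := hD.dotProduct_mulVec_pos hrow
  rw [star_trivial, ← hterm i, hzero i] at this
  exact lt_irrefl 0 this

private lemma toBlocks₁₁_eq_submatrix {p q : Type*}
    (M : Matrix (p ⊕ q) (p ⊕ q) ℝ) : M.toBlocks₁₁ = M.submatrix Sum.inl Sum.inl := rfl

private lemma toBlocks₂₂_eq_submatrix {p q : Type*}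
    (M : Matrix (p ⊕ q) (p ⊕ q) ℝ) : M.toBlocks₂₂ = M.submatrix Sum.inr Sum.inr := rfl

/-- Basic-Step feasibility correspondence: with `A 0 = fromBlocks D 0 0 0`, `D ≻ 0`,
`b 0 = 0`, a matrix `X` is feasible for (P) iff `X = fromBlocks 0 0 0 Y` for some `Y`
feasible for the reduced problem (P_pre). -/
theorem sieve_basic_step_feasibility (r s m : ℕ)
    (A : Fin (m + 1) → Matrix (Fin r ⊕ Fin s) (Fin r ⊕ Fin s) ℝ)
    (hA : ∀ i, (A i).IsSymm)
    (D : Matrix (Fin r) (Fin r) ℝ) (hD : D.PosDef)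
    (hA0 : A 0 = fromBlocks D 0 0 0)
    (b : Fin (m + 1) → ℝ) (hb0 : b 0 = 0) :
    ∀ X : Matrix (Fin r ⊕ Fin s) (Fin r ⊕ Fin s) ℝ,
      (X.PosSemidef ∧ ∀ i, (A i * X).trace = b i) ↔
      ∃ Y : Matrix (Fin s) (Fin s) ℝ, Y.PosSemidef ∧
        (∀ i : Fin m, ((A i.succ).toBlocks₂₂ * Y).trace = b i.succ) ∧
        X = fromBlocks 0 0 0 Y := by
  intro X
  constructor
  · rintro ⟨hX, hfeas⟩
    -- trace (D * X₁₁) = 0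
    have h0 : (A 0 * X).trace = 0 := by rw [hfeas 0, hb0]
    have htr : (D * X.toBlocks₁₁).trace = 0 := by
      rw [hA0] at h0
      rw [← h0]
      conv_rhs => rw [← fromBlocks_toBlocks X]
      rw [fromBlocks_multiply, trace_fromBlocks_aux]
      simp
    -- X₁₁ = 0
    have hX11 : X.toBlocks₁₁ = 0 := by
      refine psd_eq_zero_of_trace_mul_posDef hD ?_ htr
      rw [toBlocks₁₁_eq_submatrix]
      exact hX.submatrix Sum.inl
    -- columns indexed by inl are zero
    have hcol : ∀ a p, X p (Sum.inl a) = 0 := by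
      intro a p
      have hq : star (Pi.single (Sum.inl a) (1 : ℝ))
          ⬝ᵥ X *ᵥ Pi.single (Sum.inl a) (1 : ℝ) = 0 := by
        rw [star_trivial, mulVec_single, single_dotProduct]
        simpa [toBlocks₁₁] using congrFun (congrFun hX11 a) a
      have := (hX.dotProduct_mulVec_zero_iff _).mp hq
      have hp := congrFun this p
      rw [mulVec_single] at hp
      simpa using hp
    have hrow : ∀ a p, X (Sum.inl a) p = 0 := by
      intro a p
      have := congrFun (congrFun hX.1 p) (Sum.inl a)
      rw [conjTranspose_apply, star_trivial] at this
      rw [this]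
      exact hcol a p
    refine ⟨X.toBlocks₂₂, ?_, ?_, ?_⟩
    · rw [toBlocks₂₂_eq_submatrix]
      exact hX.submatrix Sum.inr
    · intro i
      have h := hfeas i.succ
      rwa [show X = fromBlocks 0 0 0 X.toBlocks₂₂ by
          ext p q
          rcases p with p | p <;> rcases q with q | q
          · simpa using hrow p (Sum.inl q)
          · simpa using hrow p (Sum.inr q)
          · simpa using hcol q (Sum.inr p)
          · rfl,
        trace_mul_fromBlocks_aux] at h
    · ext p q
      rcases p with p | p <;> rcases q with q | q
      · simpa using hrow p (Sum.inl q)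
      · simpa using hrow p (Sum.inr q)
      · simpa using hcol q (Sum.inr p)
      · rfl
  · rintro ⟨Y, hY, hfeas, rfl⟩
    refine ⟨?_, ?_⟩
    · obtain ⟨B, rfl⟩ : ∃ B : Matrix (Fin s) (Fin s) ℝ, Y = Bᴴ * B := by
        open scoped MatrixOrder in exact CStarAlgebra.nonneg_iff_eq_star_mul_self.mp hY.nonneg
      have : fromBlocks (0 : Matrix (Fin r) (Fin r) ℝ) 0 0 (Bᴴ * B)
          = (fromBlocks 0 0 0 B)ᴴ * fromBlocks 0 0 0 B := by
        rw [fromBlocks_conjTranspose, fromBlocks_multiply]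
        simp
      rw [this]
      exact posSemidef_conjTranspose_mul_self _
    · refine Fin.cases ?_ ?_
      · rw [hA0, hb0, fromBlocks_multiply, trace_fromBlocks_aux]
        simp
      · intro i
        rw [trace_mul_fromBlocks_aux]
        exact hfeas i
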